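/- Conversely, if a probability distribution π̃ on I ∪ ℰ satisfies π̃ᵀ = π̃ᵀ P^{π̃} (where P^{π̃}(i,b) = P(i,b) for i ∈ I and P^{π̃}(ε,b) = π̃(b) for ε ∈ ℰ), and π̃ is strictly positive on I, then μ := π̃_I / π̃(I) is a quasi-stationary distribution of P_I with eigenvalue γ = 1 - π̃(ℰ), and π̃(ε) = ∑_{i∈I} μ(i)P(i,ε) for all ε ∈ ℰ. -/
import Mathlib


open Finset Matrix

/-- Conversely, if a probability distribution π̃ on I ∪ ℰ, strictly positive
on I, satisfies π̃ᵀ = π̃ᵀ P^{π̃} (P^{π̃} equal to P on rows of I, each row of ℰ equal to π̃),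
then μ := π̃_I / π̃(I) is a q.s.d. of P_I with eigenvalue γ = 1 - π̃(ℰ) ∈ (0,1), and
π̃(ε) = ∑_i μ(i)P(i,ε) for all ε ∈ ℰ. -/
theorem stationary_for_Ppi_gives_qsd {I E : Type*} [Fintype I] [Fintype E]
    [DecidableEq I] [DecidableEq E] [Nonempty I] [Nonempty E]
    (P : Matrix (I ⊕ E) (I ⊕ E) ℝ)
    (PI : Matrix I I ℝ) (hPI : PI = P.submatrix Sum.inl Sum.inl)
    (hP0 : ∀ a b, 0 ≤ P a b)
    (hP1 : ∀ a, ∑ b, P a b = 1)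
    (habs : ∀ (ε : E) (b : I ⊕ E), P (Sum.inr ε) b = if b = Sum.inr ε then 1 else 0)
    (hirr : ∀ i j : I, ∃ n : ℕ, 0 < (PI ^ n) i j)
    (hsub : 0 < ∑ i : I, ∑ ε : E, P (Sum.inl i) (Sum.inr ε))
    (πt : I ⊕ E → ℝ)
    (hπt0 : ∀ a, 0 ≤ πt a) (hπt1 : ∑ a, πt a = 1)
    (hπtpos : ∀ i : I, 0 < πt (Sum.inl i))
    (Pπt : Matrix (I ⊕ E) (I ⊕ E) ℝ)
    (hPπtI : ∀ (i : I) (b : I ⊕ E), Pπt (Sum.inl i) b = P (Sum.inl i) b)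
    (hPπtE : ∀ (ε : E) (b : I ⊕ E), Pπt (Sum.inr ε) b = πt b)
    (hstat : πt ᵥ* Pπt = πt) :
    (∑ i : I, (πt (Sum.inl i) / ∑ i' : I, πt (Sum.inl i')) = 1)
    ∧ ((fun i : I => πt (Sum.inl i) / ∑ i' : I, πt (Sum.inl i')) ᵥ* PI
        = (1 - ∑ ε : E, πt (Sum.inr ε))
          • fun i : I => πt (Sum.inl i) / ∑ i' : I, πt (Sum.inl i'))
    ∧ (0 < 1 - ∑ ε : E, πt (Sum.inr ε)) ∧ (1 - ∑ ε : E, πt (Sum.inr ε) < 1)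
    ∧ ∀ ε : E, πt (Sum.inr ε)
        = ∑ i : I, (πt (Sum.inl i) / ∑ i' : I, πt (Sum.inl i')) * P (Sum.inl i) (Sum.inr ε) := by

  set s := ∑ i' : I, πt (Sum.inl i') with hs_def
  have hs : 0 < s := Finset.sum_pos (fun i _ => hπtpos i) Finset.univ_nonempty
  set e := ∑ ε : E, πt (Sum.inr ε) with he_def
  have hse : s + e = 1 := by
    rw [hs_def, he_def, ← Fintype.sum_sum_type]; exact hπt1
  have hkey : ∀ b, ∑ i : I, πt (Sum.inl i) * P (Sum.inl i) b = s * πt b := by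
    intro b
    have h := congrFun hstat b
    simp only [vecMul, dotProduct, Fintype.sum_sum_type, hPπtI, hPπtE] at h
    have h2 : ∑ ε : E, πt (Sum.inr ε) * πt b = e * πt b := by
      rw [he_def, Finset.sum_mul]
    have hs1 : s = 1 - e := by linarith
    rw [hs1]
    have : (1 - e) * πt b = πt b - e * πt b := by ring
    linarith
  have hE : ∀ ε : E, πt (Sum.inr ε)
      = ∑ i : I, (πt (Sum.inl i) / s) * P (Sum.inl i) (Sum.inr ε) := by
    intro ε
    have h := hkey (Sum.inr ε)
    simp only [div_mul_eq_mul_div, ← Finset.sum_div, h]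
    rw [mul_div_cancel_left₀ _ hs.ne']
  have hex : ∃ i ε, 0 < P (Sum.inl i) (Sum.inr ε) := by
    by_contra hc
    push_neg at hc
    have : ∑ i : I, ∑ ε : E, P (Sum.inl i) (Sum.inr ε) = 0 :=
      Finset.sum_eq_zero fun i _ => Finset.sum_eq_zero fun ε _ =>
        le_antisymm (hc i ε) (hP0 _ _)
    linarith
  obtain ⟨i0, ε0, hP0'⟩ := hex
  have hε0 : 0 < πt (Sum.inr ε0) := by
    rw [hE ε0]
    refine Finset.sum_pos' (fun i _ => mul_nonneg (div_nonneg (hπt0 _) hs.le) (hP0 _ _)) ?_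
    exact ⟨i0, Finset.mem_univ _, mul_pos (div_pos (hπtpos i0) hs) hP0'⟩
  have he : 0 < e :=
    Finset.sum_pos' (fun ε _ => hπt0 _) ⟨ε0, Finset.mem_univ _, hε0⟩
  refine ⟨?_, ?_, by linarith, by linarith, hE⟩
  · rw [← Finset.sum_div, div_self hs.ne']
  · funext j
    simp only [vecMul, dotProduct, hPI, Matrix.submatrix_apply, Pi.smul_apply,
      smul_eq_mul]
    simp only [div_mul_eq_mul_div, ← Finset.sum_div, hkey (Sum.inl j)]
    rw [show (1:ℝ) - e = s from by linarith, mul_div_assoc]
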